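/- arXiv:1210.1116 — 3 statements merged into one kernel-verified Lean document; each statement's English description precedes it below -/
import Mathlib

section
/- Let P and P̃ be skip-free stochastic matrices on E_k = {0,...,k}, and let both Markov chains start at state 0 (initial law δ_0). Suppose there exists an integer m with 1 ≤ m ≤ k-1 such that: (i) T_m ⪯_st T̃_m, i.e. for every n ∈ ℕ, ∑_{0≤j≤m-1} (Q_m^n)_{0,j} ≤ ∑_{0≤j≤m-1} (Q̃_m^n)_{0,j}; and (ii) for every i with m ≤ i ≤ k-1, p̃_{i,i+1} ≤ p_{i,i+1} and p̃_{i,0} + p̃_{i,i+1} = 1. Then T_i ⪯_st T̃_i for every i with m ≤ i ≤ k, i.e. for each such i and every n ∈ ℕ, ∑_{0≤j≤i-1} (Q_i^n)_{0,j} ≤ ∑_{0≤j≤i-1} (Q̃_i^n)_{0,j}. -/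
open Finset Matrix

/-- A (row-)stochastic matrix. -/
def IsStochastic {m : ℕ} (P : Matrix (Fin m) (Fin m) ℝ) : Prop :=
  (∀ i j, 0 ≤ P i j) ∧ ∀ i, ∑ j, P i j = 1

/-- Skip-free (on the right): `p_{i,j} = 0` whenever `j > i+1`. -/
def SkipFree {m : ℕ} (P : Matrix (Fin m) (Fin m) ℝ) : Prop :=
  ∀ i j : Fin m, (i : ℕ) + 1 < (j : ℕ) → P i j = 0

/-- The survival function for the chain started at `0`:
`P(T_h > n) = ∑_{0 ≤ j ≤ h-1} (Q_h^n)_{0,j}`,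
where `Q_h` is the leading `h × h` submatrix of `P`. -/
noncomputable def hitSurvival0 {k : ℕ} (P : Matrix (Fin (k + 1)) (Fin (k + 1)) ℝ)
    (h : ℕ) (h1 : 0 < h) (h2 : h ≤ k) (n : ℕ) : ℝ :=
  ∑ j : Fin h,
    ((P.submatrix (Fin.castLE (h2.trans k.le_succ)) (Fin.castLE (h2.trans k.le_succ))) ^ n)
      ⟨0, h1⟩ j

noncomputable def surv {N : ℕ} (Q : Matrix (Fin N) (Fin N) ℝ) (n : ℕ) (x : Fin N) : ℝ :=
  ∑ j, (Q ^ n) x j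

lemma surv_zero {N : ℕ} (Q : Matrix (Fin N) (Fin N) ℝ) (x : Fin N) : surv Q 0 x = 1 := by
  simp [surv, Matrix.one_apply]

lemma surv_succ {N : ℕ} (Q : Matrix (Fin N) (Fin N) ℝ) (n : ℕ) (x : Fin N) :
    surv Q (n+1) x = ∑ l, Q x l * surv Q n l := by
  simp only [surv, pow_succ', Matrix.mul_apply]
  rw [Finset.sum_comm]
  simp [Finset.mul_sum]

lemma surv_succ' {N : ℕ} (Q : Matrix (Fin N) (Fin N) ℝ) (n : ℕ) (x : Fin N) :
    surv Q (n+1) x = ∑ l, (Q ^ n) x l * (∑ b, Q l b) := by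
  simp only [surv, pow_succ, Matrix.mul_apply]
  rw [Finset.sum_comm]
  simp [Finset.mul_sum]

lemma pow_entry_nonneg {N : ℕ} (Q : Matrix (Fin N) (Fin N) ℝ) (hQ : ∀ a b, 0 ≤ Q a b) :
    ∀ n (a b : Fin N), 0 ≤ (Q ^ n) a b := by
  intro n
  induction n with
  | zero => intro a b; by_cases h : a = b <;> simp [Matrix.one_apply, h]
  | succ n IH =>
    intro a b
    rw [pow_succ', Matrix.mul_apply]
    exact Finset.sum_nonneg fun l _ => mul_nonneg (hQ a l) (IH l b)

lemma surv_nonneg {N : ℕ} (Q : Matrix (Fin N) (Fin N) ℝ) (hQ : ∀ a b, 0 ≤ Q a b)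
    (n : ℕ) (x : Fin N) : 0 ≤ surv Q n x :=
  Finset.sum_nonneg fun j _ => pow_entry_nonneg Q hQ n x j

lemma surv_le_one {N : ℕ} (Q : Matrix (Fin N) (Fin N) ℝ) (hQ : ∀ a b, 0 ≤ Q a b)
    (hrow : ∀ a, ∑ b, Q a b ≤ 1) (n : ℕ) (x : Fin N) : surv Q n x ≤ 1 := by
  induction n generalizing x with
  | zero => simp [surv_zero]
  | succ n IH =>
    rw [surv_succ]
    calc ∑ l, Q x l * surv Q n l ≤ ∑ l, Q x l * 1 := by
          apply Finset.sum_le_sum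
          intro l _
          exact mul_le_mul_of_nonneg_left (IH l) (hQ x l)
      _ ≤ 1 := by simpa using hrow x

lemma surv_succ_le {N : ℕ} (Q : Matrix (Fin N) (Fin N) ℝ) (hQ : ∀ a b, 0 ≤ Q a b)
    (hrow : ∀ a, ∑ b, Q a b ≤ 1) (n : ℕ) (x : Fin N) : surv Q (n+1) x ≤ surv Q n x := by
  induction n generalizing x with
  | zero => rw [surv_zero]; simpa [surv, pow_one] using hrow x
  | succ n IH =>
    rw [surv_succ Q (n+1), surv_succ Q n]
    exact Finset.sum_le_sum fun l _ => mul_le_mul_of_nonneg_left (IH l) (hQ x l)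

lemma surv_anti {N : ℕ} (Q : Matrix (Fin N) (Fin N) ℝ) (hQ : ∀ a b, 0 ≤ Q a b)
    (hrow : ∀ a, ∑ b, Q a b ≤ 1) (x : Fin N) {a b : ℕ} (hab : a ≤ b) :
    surv Q b x ≤ surv Q a x := by
  induction b with
  | zero => simp_all
  | succ b IH =>
    rcases Nat.lt_or_ge a (b+1) with h | h
    · exact le_trans (surv_succ_le Q hQ hrow b x) (IH (by omega))
    · have : a = b + 1 := by omega
      simp [this]

lemma sum_castLE {n N : ℕ} (h : n ≤ N) (f : Fin N → ℝ)
    (hf : ∀ b : Fin N, n ≤ (b : ℕ) → f b = 0) :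
    ∑ b : Fin n, f (Fin.castLE h b) = ∑ b : Fin N, f b := by
  classical
  have : ∑ b : Fin n, f (Fin.castLE h b) = ∑ b ∈ Finset.univ.map (Fin.castLEEmb h), f b := by
    rw [Finset.sum_map]; rfl
  rw [this]
  apply Finset.sum_subset (Finset.subset_univ _)
  intro b _ hb
  apply hf
  by_contra hlt
  push_neg at hlt
  exact hb (Finset.mem_map.mpr ⟨⟨b, hlt⟩, Finset.mem_univ _, by simp [Fin.castLEEmb]⟩)

lemma fp_identity {N : ℕ} (Q : Matrix (Fin N) (Fin N) ℝ) (J : ℕ) (hJ : J < N)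
    (hcut : ∀ a b : Fin N, (a:ℕ) < J → J < (b:ℕ) → Q a b = 0) :
    ∀ (n : ℕ) (x : Fin N) (hx : (x:ℕ) < J),
    surv Q n x = surv (Q.submatrix (Fin.castLE hJ.le) (Fin.castLE hJ.le)) n ⟨(x:ℕ), hx⟩
      + ∑ s ∈ Finset.range n,
          (∑ l : Fin J, ((Q.submatrix (Fin.castLE hJ.le) (Fin.castLE hJ.le)) ^ s) ⟨(x:ℕ), hx⟩ l
            * Q (Fin.castLE hJ.le l) ⟨J, hJ⟩) * surv Q (n - 1 - s) ⟨J, hJ⟩ := by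
  set R := Q.submatrix (Fin.castLE hJ.le) (Fin.castLE hJ.le) with hRdef
  intro n
  induction n with
  | zero => intro x hx; simp [surv_zero]
  | succ n IH =>
    intro x hx
    have hJ1 : J + 1 ≤ N := hJ
    have hc1 : ∀ b : Fin J, Fin.castLE hJ1 b.castSucc = Fin.castLE hJ.le b := by
      intro b; apply Fin.ext; simp
    have hc2 : Fin.castLE hJ1 (Fin.last J) = ⟨J, hJ⟩ := by apply Fin.ext; simp
    have hxx : Fin.castLE hJ.le ⟨(x:ℕ), hx⟩ = x := by apply Fin.ext; simp
    calc surv Q (n+1) x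
        = ∑ b : Fin (J+1), Q x (Fin.castLE hJ1 b) * surv Q n (Fin.castLE hJ1 b) := by
          rw [surv_succ, ← sum_castLE hJ1 (fun b => Q x b * surv Q n b) (fun b hb => by
            show Q x b * surv Q n b = 0
            rw [hcut x b hx (by omega), zero_mul])]
      _ = (∑ b : Fin J, Q x (Fin.castLE hJ.le b) * surv Q n (Fin.castLE hJ.le b))
          + Q x ⟨J, hJ⟩ * surv Q n ⟨J, hJ⟩ := by
          rw [Fin.sum_univ_castSucc]
          simp only [hc1, hc2]
      _ = (∑ b : Fin J, Q x (Fin.castLE hJ.le b) *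
            (surv R n b + ∑ s ∈ Finset.range n,
              (∑ l : Fin J, (R ^ s) b l * Q (Fin.castLE hJ.le l) ⟨J, hJ⟩)
                * surv Q (n - 1 - s) ⟨J, hJ⟩))
          + Q x ⟨J, hJ⟩ * surv Q n ⟨J, hJ⟩ := by
          refine congrArg (· + _) (Finset.sum_congr rfl fun b _ => ?_)
          rw [IH (Fin.castLE hJ.le b) b.isLt]
          rfl
      _ = (∑ b : Fin J, R ⟨(x:ℕ), hx⟩ b * surv R n b)
          + ((∑ s ∈ Finset.range n,
              (∑ l : Fin J, (R ^ (s+1)) ⟨(x:ℕ), hx⟩ l * Q (Fin.castLE hJ.le l) ⟨J, hJ⟩)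
                * surv Q (n - 1 - s) ⟨J, hJ⟩)
            + (∑ l : Fin J, (R ^ 0) ⟨(x:ℕ), hx⟩ l * Q (Fin.castLE hJ.le l) ⟨J, hJ⟩)
                * surv Q n ⟨J, hJ⟩) := by
          have hRx : ∀ b : Fin J, R ⟨(x:ℕ), hx⟩ b = Q x (Fin.castLE hJ.le b) := by
            intro b; rw [hRdef]; simp [Matrix.submatrix_apply, hxx]
          have hT3 : (∑ l : Fin J, (R ^ 0) ⟨(x:ℕ), hx⟩ l * Q (Fin.castLE hJ.le l) ⟨J, hJ⟩)
              = Q x ⟨J, hJ⟩ := by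
            rw [pow_zero]
            rw [Finset.sum_eq_single (⟨(x:ℕ), hx⟩ : Fin J)]
            · simp [Matrix.one_apply, hxx]
            · intro b _ hb; simp [Matrix.one_apply, Ne.symm hb]
            · intro h; exact absurd (Finset.mem_univ _) h
          have hT2 : ∀ s, (∑ l : Fin J, (R ^ (s+1)) ⟨(x:ℕ), hx⟩ l * Q (Fin.castLE hJ.le l) ⟨J, hJ⟩)
              = ∑ b : Fin J, Q x (Fin.castLE hJ.le b) *
                  (∑ l : Fin J, (R ^ s) b l * Q (Fin.castLE hJ.le l) ⟨J, hJ⟩) := by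
            intro s
            simp only [pow_succ', Matrix.mul_apply, Finset.sum_mul, Finset.mul_sum]
            rw [Finset.sum_comm]
            refine Finset.sum_congr rfl fun b _ => Finset.sum_congr rfl fun l _ => ?_
            rw [hRx b]; ring
          have helper : ∀ (f A : Fin J → ℝ) (B : Fin J → ℕ → ℝ) (g : ℕ → ℝ),
              (∑ b, f b * (A b + ∑ s ∈ Finset.range n, B b s * g s))
              = (∑ b, f b * A b) + ∑ s ∈ Finset.range n, (∑ b, f b * B b s) * g s := by
            intro f A B g
            simp only [mul_add, Finset.sum_add_distrib, Finset.mul_sum, Finset.sum_mul]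
            congr 1
            rw [Finset.sum_comm]
            exact Finset.sum_congr rfl fun s _ => Finset.sum_congr rfl fun b _ => by ring
          rw [helper (fun b => Q x (Fin.castLE hJ.le b)) (fun b => surv R n b)
            (fun b s => ∑ l : Fin J, (R ^ s) b l * Q (Fin.castLE hJ.le l) ⟨J, hJ⟩)
            (fun s => surv Q (n - 1 - s) ⟨J, hJ⟩)]
          rw [hT3]
          simp only [hT2]
          rw [add_assoc]
          congr 1

      _ = surv R (n+1) ⟨(x:ℕ), hx⟩
          + ∑ s ∈ Finset.range (n+1),
            (∑ l : Fin J, (R ^ s) ⟨(x:ℕ), hx⟩ l * Q (Fin.castLE hJ.le l) ⟨J, hJ⟩)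
              * surv Q (n + 1 - 1 - s) ⟨J, hJ⟩ := by
          rw [surv_succ R n, Finset.sum_range_succ']
          simp only [show ∀ s, n + 1 - 1 - (s+1) = n - 1 - s from fun s => by omega,
            show n + 1 - 1 - 0 = n from rfl]

lemma sum_castLE_le {n N : ℕ} (h : n ≤ N) (f : Fin N → ℝ)
    (hf : ∀ b : Fin N, 0 ≤ f b) :
    ∑ b : Fin n, f (Fin.castLE h b) ≤ ∑ b : Fin N, f b := by
  classical
  have : ∑ b : Fin n, f (Fin.castLE h b) = ∑ b ∈ Finset.univ.map (Fin.castLEEmb h), f b := by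
    rw [Finset.sum_map]; rfl
  rw [this]
  exact Finset.sum_le_sum_of_subset_of_nonneg (Finset.subset_univ _) (fun b _ _ => hf b)


lemma fp_identity' {N J : ℕ} (Q : Matrix (Fin N) (Fin N) ℝ) (hJ : J < N) (hJ0 : 0 < J)
    (hcut : ∀ a b : Fin N, (a:ℕ) < J → J < (b:ℕ) → Q a b = 0)
    (hrow : ∀ a : Fin N, (a:ℕ) < J → ∑ b, Q a b = 1) (n : ℕ) :
    surv Q n ⟨0, hJ0.trans hJ⟩
      = surv (Q.submatrix (Fin.castLE hJ.le) (Fin.castLE hJ.le)) n ⟨0, hJ0⟩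
      + ∑ s ∈ Finset.range n,
          (surv (Q.submatrix (Fin.castLE hJ.le) (Fin.castLE hJ.le)) s ⟨0, hJ0⟩
            - surv (Q.submatrix (Fin.castLE hJ.le) (Fin.castLE hJ.le)) (s+1) ⟨0, hJ0⟩)
            * surv Q (n - 1 - s) ⟨J, hJ⟩ := by
  set R := Q.submatrix (Fin.castLE hJ.le) (Fin.castLE hJ.le) with hRdef
  have hJ1 : J + 1 ≤ N := hJ
  have key : ∀ (l : Fin J) (s : ℕ),
      1 - ∑ b : Fin J, R l b = Q (Fin.castLE hJ.le l) ⟨J, hJ⟩ := by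
    intro l s
    have h1 : ∑ b : Fin (J+1), Q (Fin.castLE hJ.le l) (Fin.castLE hJ1 b)
        = ∑ b, Q (Fin.castLE hJ.le l) b := by
      apply sum_castLE
      intro b hb
      exact hcut _ b l.isLt (by omega)
    rw [Fin.sum_univ_castSucc] at h1
    have hc1 : ∀ b : Fin J, Fin.castLE hJ1 b.castSucc = Fin.castLE hJ.le b := by
      intro b; apply Fin.ext; simp
    have hc2 : Fin.castLE hJ1 (Fin.last J) = ⟨J, hJ⟩ := by apply Fin.ext; simp
    simp only [hc1, hc2] at h1
    have h2 : ∑ b, Q (Fin.castLE hJ.le l) b = 1 := hrow _ l.isLt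
    have h3 : ∀ b : Fin J, R l b = Q (Fin.castLE hJ.le l) (Fin.castLE hJ.le b) := fun b => rfl
    simp only [h3]
    linarith [h1, h2]
  have tele : ∀ s, surv R s ⟨0, hJ0⟩ - surv R (s+1) ⟨0, hJ0⟩
      = ∑ l : Fin J, (R ^ s) ⟨0, hJ0⟩ l * Q (Fin.castLE hJ.le l) ⟨J, hJ⟩ := by
    intro s
    rw [surv_succ']
    have : surv R s ⟨0, hJ0⟩ = ∑ l, (R ^ s) ⟨0, hJ0⟩ l * 1 := by simp [surv]
    rw [this, ← Finset.sum_sub_distrib]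
    refine Finset.sum_congr rfl fun l _ => ?_
    rw [← mul_sub, key l s]
  have := fp_identity Q J hJ hcut n ⟨0, hJ0.trans hJ⟩ hJ0
  rw [this]
  congr 1
  refine Finset.sum_congr rfl fun s _ => ?_
  rw [tele s]

lemma surv_le_surv_zero {N : ℕ} (Q : Matrix (Fin N) (Fin N) ℝ) (hN : 0 < N)
    (h0 : ∀ a b, 0 ≤ Q a b) (hsf : ∀ a b : Fin N, (a:ℕ) + 1 < (b:ℕ) → Q a b = 0)
    (hrow1 : ∀ a : Fin N, (a:ℕ) + 1 < N → ∑ b, Q a b = 1)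
    (hrowle : ∀ a, ∑ b, Q a b ≤ 1)
    (n : ℕ) (l : Fin N) : surv Q n l ≤ surv Q n ⟨0, hN⟩ := by
  rcases Nat.eq_zero_or_pos (l : ℕ) with h | hJ0
  · have : l = ⟨0, hN⟩ := Fin.ext h
    rw [this]
  · have hJ : (l : ℕ) < N := l.isLt
    set R := Q.submatrix (Fin.castLE hJ.le) (Fin.castLE hJ.le) with hRdef
    have hR0 : ∀ a b, 0 ≤ R a b := fun a b => h0 _ _
    have hRle : ∀ a, ∑ b, R a b ≤ 1 := by
      intro a
      calc ∑ b : Fin (l:ℕ), Q (Fin.castLE hJ.le a) (Fin.castLE hJ.le b)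
          ≤ ∑ b, Q (Fin.castLE hJ.le a) b := sum_castLE_le hJ.le _ (fun b => h0 _ b)
        _ ≤ 1 := hrowle _
    have hl : (⟨(l:ℕ), hJ⟩ : Fin N) = l := Fin.ext rfl
    have hid := fp_identity' Q hJ hJ0
      (fun a b ha hb => hsf a b (by omega))
      (fun a ha => hrow1 a (by omega)) n
    rw [hl] at hid
    rw [hid]
    have hwn0 : 0 ≤ surv R n ⟨0, hJ0⟩ := surv_nonneg R hR0 n _
    have hwn1 : surv R n ⟨0, hJ0⟩ ≤ 1 := surv_le_one R hR0 hRle n _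
    have hle1 : surv Q n l ≤ 1 := surv_le_one Q h0 hrowle n l
    have step : ∑ s ∈ Finset.range n,
        (surv R s ⟨0, hJ0⟩ - surv R (s+1) ⟨0, hJ0⟩) * surv Q (n - 1 - s) l
        ≥ (1 - surv R n ⟨0, hJ0⟩) * surv Q n l := by
      have htele : ∑ s ∈ Finset.range n,
          (surv R s ⟨0, hJ0⟩ - surv R (s+1) ⟨0, hJ0⟩) = 1 - surv R n ⟨0, hJ0⟩ := by
        rw [Finset.sum_range_sub' (fun s => surv R s ⟨0, hJ0⟩) n, surv_zero]
      rw [← htele, Finset.sum_mul]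
      apply Finset.sum_le_sum
      intro s _
      have hd : 0 ≤ surv R s ⟨0, hJ0⟩ - surv R (s+1) ⟨0, hJ0⟩ :=
        sub_nonneg.mpr (surv_succ_le R hR0 hRle s _)
      exact mul_le_mul_of_nonneg_left (surv_anti Q h0 hrowle l (by omega)) hd
    nlinarith [step]

lemma abel_S (w c : ℕ → ℝ) (hw0 : w 0 = 1) (hc0 : c 0 = 1) (n : ℕ) :
    w n + ∑ s ∈ Finset.range n, (w s - w (s+1)) * c (n-1-s)
      = c n + ∑ s ∈ Finset.range n, w s * (c (n-1-s) - c (n-s)) := by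
  have hA1 : ∑ s ∈ Finset.range (n+1), w s * c (n-s)
      = ∑ s ∈ Finset.range n, w (s+1) * c (n-1-s) + w 0 * c n := by
    rw [Finset.sum_range_succ' (fun s => w s * c (n-s)) n]
    congr 1
    refine Finset.sum_congr rfl fun s _ => ?_
    congr 2
    omega
  have hA2 : ∑ s ∈ Finset.range (n+1), w s * c (n-s)
      = ∑ s ∈ Finset.range n, w s * c (n-s) + w n * c 0 := by
    rw [Finset.sum_range_succ]
    congr 3
    omega
  simp only [sub_mul, mul_sub, Finset.sum_sub_distrib]
  have e1 : ∑ s ∈ Finset.range n, w (s+1) * c (n-1-s)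
      = ∑ s ∈ Finset.range (n+1), w s * c (n-s) - c n := by rw [hA1, hw0]; ring
  have e2 : ∑ s ∈ Finset.range n, w s * c (n-s)
      = ∑ s ∈ Finset.range (n+1), w s * c (n-s) - w n := by rw [hA2, hc0]; ring
  rw [e1, e2]
  ring

lemma core_step (L : ℕ) (hL : 0 < L) (Q Qt : Matrix (Fin (L+1)) (Fin (L+1)) ℝ)
    (hQ0 : ∀ a b, 0 ≤ Q a b) (hQt0 : ∀ a b, 0 ≤ Qt a b)
    (hsf : ∀ a b : Fin (L+1), (a:ℕ) + 1 < (b:ℕ) → Q a b = 0)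
    (hrow : ∀ a : Fin (L+1), (a:ℕ) < L → ∑ b, Q a b = 1)
    (hrowt : ∀ a : Fin (L+1), (a:ℕ) < L → ∑ b, Qt a b = 1)
    (hlast1 : ∑ b, Q ⟨L, by omega⟩ b ≤ 1)
    (hlast : ∑ b, Q ⟨L, by omega⟩ b ≤ ∑ b, Qt ⟨L, by omega⟩ b)
    (hlastt : ∀ b : Fin (L+1), (b:ℕ) ≠ 0 → Qt ⟨L, by omega⟩ b = 0)
    (hw : ∀ n, surv (Q.submatrix (Fin.castLE (Nat.le_succ L)) (Fin.castLE (Nat.le_succ L))) n ⟨0, hL⟩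
        ≤ surv (Qt.submatrix (Fin.castLE (Nat.le_succ L)) (Fin.castLE (Nat.le_succ L))) n ⟨0, hL⟩) :
    ∀ n, surv Q n ⟨0, by omega⟩ ≤ surv Qt n ⟨0, by omega⟩ := by
  have hLL : L < L + 1 := by omega
  have z0 : Fin (L+1) := ⟨0, by omega⟩
  -- row sums of Q are ≤ 1
  have hQle : ∀ a, ∑ b, Q a b ≤ 1 := by
    intro a
    rcases Nat.lt_or_ge (a : ℕ) L with h | h
    · exact le_of_eq (hrow a h)
    · have ha : (a:ℕ) = L := by have := a.isLt; omega
      have : a = ⟨L, by omega⟩ := Fin.ext (by simp [ha])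
      rw [this]; exact hlast1
  -- the last-row sum of Qt is just its (L,0) entry
  have hQtlast : ∑ b, Qt ⟨L, by omega⟩ b = Qt ⟨L, by omega⟩ ⟨0, by omega⟩ := by
    apply Finset.sum_eq_single
    · intro b _ hb
      exact hlastt b (fun h => hb (Fin.ext h))
    · intro h; exact absurd (Finset.mem_univ _) h
  -- cut hypotheses at J = L
  have hcutQ : ∀ a b : Fin (L+1), (a:ℕ) < L → L < (b:ℕ) → Q a b = 0 :=
    fun a b ha hb => hsf a b (by omega)
  have hcutQt : ∀ a b : Fin (L+1), (a:ℕ) < L → L < (b:ℕ) → Qt a b = 0 := by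
    intro a b ha hb; exact absurd b.isLt (by omega)
  set R := Q.submatrix (Fin.castLE hLL.le) (Fin.castLE hLL.le) with hRdef
  set Rt := Qt.submatrix (Fin.castLE hLL.le) (Fin.castLE hLL.le) with hRtdef
  have hR0 : ∀ a b, 0 ≤ R a b := fun a b => hQ0 _ _
  have hRt0 : ∀ a b, 0 ≤ Rt a b := fun a b => hQt0 _ _
  have hRle : ∀ a, ∑ b, R a b ≤ 1 := by
    intro a
    calc ∑ b : Fin L, Q (Fin.castLE hLL.le a) (Fin.castLE hLL.le b)
        ≤ ∑ b, Q (Fin.castLE hLL.le a) b := sum_castLE_le hLL.le _ (fun b => hQ0 _ b)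
      _ ≤ 1 := hQle _
  have hRtle : ∀ a, ∑ b, Rt a b ≤ 1 := by
    intro a
    calc ∑ b : Fin L, Qt (Fin.castLE hLL.le a) (Fin.castLE hLL.le b)
        ≤ ∑ b, Qt (Fin.castLE hLL.le a) b := sum_castLE_le hLL.le _ (fun b => hQt0 _ b)
      _ ≤ 1 := le_of_eq (hrowt _ a.isLt)
  -- shorthands
  set w : ℕ → ℝ := fun s => surv R s ⟨0, hL⟩ with hwdef
  set wt : ℕ → ℝ := fun s => surv Rt s ⟨0, hL⟩ with hwtdef
  set g : ℕ → ℝ := fun s => surv Q s ⟨L, hLL⟩ with hgdef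
  set gt : ℕ → ℝ := fun s => surv Qt s ⟨L, hLL⟩ with hgtdef
  have hid : ∀ n, surv Q n ⟨0, by omega⟩
      = w n + ∑ s ∈ Finset.range n, (w s - w (s+1)) * g (n - 1 - s) :=
    fun n => fp_identity' Q hLL hL hcutQ hrow n
  have hidt : ∀ n, surv Qt n ⟨0, by omega⟩
      = wt n + ∑ s ∈ Finset.range n, (wt s - wt (s+1)) * gt (n - 1 - s) :=
    fun n => fp_identity' Qt hLL hL hcutQt hrowt n
  have hw0 : w 0 = 1 := surv_zero R _
  have hwt0 : wt 0 = 1 := surv_zero Rt _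
  have hg0 : g 0 = 1 := surv_zero Q _
  have hgt0 : gt 0 = 1 := surv_zero Qt _
  intro n
  induction n using Nat.strong_induction_on with
  | _ n IH =>
  -- the inner comparison of "from the top state" survivals
  have hg_le : ∀ u, u < n → g u ≤ gt u := by
    intro u hu
    rcases u with _ | t
    · rw [hg0, hgt0]
    · have hvt : surv Q t ⟨0, by omega⟩ ≤ surv Qt t ⟨0, by omega⟩ := IH t (by omega)
      have h1 : g (t+1) = ∑ l, Q ⟨L, hLL⟩ l * surv Q t l := surv_succ Q t _
      have h2 : gt (t+1) = Qt ⟨L, hLL⟩ ⟨0, by omega⟩ * surv Qt t ⟨0, by omega⟩ := by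
        rw [hgtdef]
        simp only
        rw [surv_succ Qt t]
        apply Finset.sum_eq_single
        · intro b _ hb
          rw [hlastt b (fun h => hb (Fin.ext h)), zero_mul]
        · intro h; exact absurd (Finset.mem_univ _) h
      rw [h1, h2]
      calc ∑ l, Q ⟨L, hLL⟩ l * surv Q t l
          ≤ ∑ l, Q ⟨L, hLL⟩ l * surv Q t ⟨0, by omega⟩ := by
            apply Finset.sum_le_sum
            intro l _
            exact mul_le_mul_of_nonneg_left
              (surv_le_surv_zero Q (by omega) hQ0 hsf
                (fun a ha => hrow a (by omega)) hQle t l) (hQ0 _ l)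
        _ = (∑ l, Q ⟨L, hLL⟩ l) * surv Q t ⟨0, by omega⟩ := by rw [Finset.sum_mul]
        _ ≤ (∑ l, Qt ⟨L, hLL⟩ l) * surv Qt t ⟨0, by omega⟩ := by
            apply mul_le_mul hlast hvt (surv_nonneg Q hQ0 t _)
            calc (0:ℝ) ≤ ∑ l, Q ⟨L, hLL⟩ l := Finset.sum_nonneg fun l _ => hQ0 _ l
              _ ≤ _ := hlast
        _ = Qt ⟨L, hLL⟩ ⟨0, by omega⟩ * surv Qt t ⟨0, by omega⟩ := by rw [hQtlast]
  -- the chain of inequalities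
  rw [hid n, hidt n]
  have step2 : w n + ∑ s ∈ Finset.range n, (w s - w (s+1)) * g (n - 1 - s)
      = g n + ∑ s ∈ Finset.range n, w s * (g (n-1-s) - g (n-s)) := abel_S w g hw0 hg0 n
  have step4 : wt n + ∑ s ∈ Finset.range n, (wt s - wt (s+1)) * g (n - 1 - s)
      = g n + ∑ s ∈ Finset.range n, wt s * (g (n-1-s) - g (n-s)) := abel_S wt g hwt0 hg0 n
  have step3 : g n + ∑ s ∈ Finset.range n, w s * (g (n-1-s) - g (n-s))
      ≤ g n + ∑ s ∈ Finset.range n, wt s * (g (n-1-s) - g (n-s)) := by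
    apply add_le_add_right
    apply Finset.sum_le_sum
    intro s _
    apply mul_le_mul_of_nonneg_right (hw s)
    have : n - s = (n - 1 - s) + 1 ∨ n - s = n - 1 - s := by omega
    rcases this with h | h
    · rw [h]; exact sub_nonneg.mpr (surv_succ_le Q hQ0 hQle _ _)
    · rw [h]; simp
  have step5 : wt n + ∑ s ∈ Finset.range n, (wt s - wt (s+1)) * g (n - 1 - s)
      ≤ wt n + ∑ s ∈ Finset.range n, (wt s - wt (s+1)) * gt (n - 1 - s) := by
    apply add_le_add_right
    apply Finset.sum_le_sum
    intro s hs
    have hsn : s < n := Finset.mem_range.mp hs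
    apply mul_le_mul_of_nonneg_left (hg_le (n - 1 - s) (by omega))
    exact sub_nonneg.mpr (surv_succ_le Rt hRt0 hRtle s _)
  calc w n + ∑ s ∈ Finset.range n, (w s - w (s+1)) * g (n - 1 - s)
      = g n + ∑ s ∈ Finset.range n, w s * (g (n-1-s) - g (n-s)) := step2
    _ ≤ g n + ∑ s ∈ Finset.range n, wt s * (g (n-1-s) - g (n-s)) := step3
    _ = wt n + ∑ s ∈ Finset.range n, (wt s - wt (s+1)) * g (n - 1 - s) := step4.symm
    _ ≤ wt n + ∑ s ∈ Finset.range n, (wt s - wt (s+1)) * gt (n - 1 - s) := step5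

/-- Theorem 3 (De Santis–Spizzichino): for two skip-free chains started at `0`,
if `T_m ⪯_st T̃_m` for some `1 ≤ m ≤ k-1` and, for every state `m ≤ i ≤ k-1`,
`p̃_{i,i+1} ≤ p_{i,i+1}` and `p̃_{i,0} + p̃_{i,i+1} = 1`, then
`T_i ⪯_st T̃_i` for every `m ≤ i ≤ k`. -/
theorem hitting_times_st_order_above_m
    (k : ℕ) (P Pt : Matrix (Fin (k + 1)) (Fin (k + 1)) ℝ)
    (hP : IsStochastic P) (hPt : IsStochastic Pt)
    (hsfP : SkipFree P) (hsfPt : SkipFree Pt)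
    (m : ℕ) (hm1 : 1 ≤ m) (hm2 : m ≤ k - 1)
    (hTm : ∀ n : ℕ, hitSurvival0 P m (by omega) (by omega) n ≤
      hitSurvival0 Pt m (by omega) (by omega) n)
    (hii : ∀ i : ℕ, ∀ (him : m ≤ i) (hik : i ≤ k - 1),
      Pt ⟨i, by omega⟩ ⟨i + 1, by omega⟩ ≤ P ⟨i, by omega⟩ ⟨i + 1, by omega⟩ ∧
      Pt ⟨i, by omega⟩ ⟨0, by omega⟩ + Pt ⟨i, by omega⟩ ⟨i + 1, by omega⟩ = 1) :
    ∀ i : ℕ, ∀ (him : m ≤ i) (hik : i ≤ k), ∀ n : ℕ,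
      hitSurvival0 P i (by omega) (by omega) n ≤ hitSurvival0 Pt i (by omega) (by omega) n := by
  have hk : 1 ≤ k := by omega
  intro i him
  induction i, him using Nat.le_induction with
  | base => intro hik n; exact hTm n
  | succ i him IH =>
    intro hik n
    have hik1 : i ≤ k - 1 := by omega
    have hik' : i ≤ k := by omega
    have hii' := hii i him hik1
    have hsub : i + 1 ≤ k + 1 := by omega
    have hsub2 : i + 2 ≤ k + 1 := by omega
    have hi : i ≤ k + 1 := by omega
    have hiL : (0:ℕ) < i := by omega
    -- hrow for a generic stochastic skip-free matrix
    have hrow_gen : ∀ (M : Matrix (Fin (k+1)) (Fin (k+1)) ℝ), IsStochastic M → SkipFree M →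
        ∀ a : Fin (i+1), (a:ℕ) < i → ∑ b : Fin (i+1), M.submatrix (Fin.castLE hsub) (Fin.castLE hsub) a b = 1 := by
      intro M hM hsfM a ha
      have := sum_castLE hsub (fun b => M (Fin.castLE hsub a) b) (fun b hb => by
        apply hsfM
        simp only [Fin.coe_castLE]
        omega)
      simp only [Matrix.submatrix_apply]
      rw [this, hM.2]
    -- the last-row sums
    have hlast_gen : ∀ (M : Matrix (Fin (k+1)) (Fin (k+1)) ℝ), IsStochastic M → SkipFree M →
        ∑ b : Fin (i+1), M.submatrix (Fin.castLE hsub) (Fin.castLE hsub) ⟨i, by omega⟩ b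
          = 1 - M ⟨i, by omega⟩ ⟨i + 1, by omega⟩ := by
      intro M hM hsfM
      have h1 : ∑ b : Fin (i+2), M ⟨i, by omega⟩ (Fin.castLE hsub2 b)
          = ∑ b, M ⟨i, by omega⟩ b := by
        apply sum_castLE
        intro b hb
        apply hsfM
        simp only [Fin.coe_castLE]
        omega
      rw [hM.2] at h1
      rw [Fin.sum_univ_castSucc] at h1
      have hc2 : Fin.castLE hsub2 (Fin.last (i+1)) = ⟨i+1, by omega⟩ := by
        apply Fin.ext; simp
      rw [hc2] at h1
      have hcs : ∀ b : Fin (i+1), Fin.castLE hsub2 b.castSucc = Fin.castLE hsub b := by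
        intro b; apply Fin.ext; simp
      simp only [hcs] at h1
      have : ∀ b : Fin (i+1),
          M.submatrix (Fin.castLE hsub) (Fin.castLE hsub) ⟨i, by omega⟩ b
            = M ⟨i, by omega⟩ (Fin.castLE hsub b) := fun b => rfl
      simp only [this]
      linarith [h1]
    apply core_step i hiL
      (P.submatrix (Fin.castLE hsub) (Fin.castLE hsub))
      (Pt.submatrix (Fin.castLE hsub) (Fin.castLE hsub))
      (fun a b => hP.1 _ _) (fun a b => hPt.1 _ _)
      (fun a b hab => hsfP _ _ (by simpa using hab))
      (hrow_gen P hP hsfP) (hrow_gen Pt hPt hsfPt)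
      ?hlast1 ?hlast ?hlastt ?hw
    case hlast1 =>
      rw [hlast_gen P hP hsfP]
      have := hP.1 ⟨i, by omega⟩ ⟨i+1, by omega⟩
      linarith
    case hlast =>
      rw [hlast_gen P hP hsfP, hlast_gen Pt hPt hsfPt]
      have := hii'.1
      linarith
    case hlastt =>
      intro b hb
      have hsum := hPt.2 ⟨i, by omega⟩
      have hpair : ({(⟨0, by omega⟩ : Fin (k+1)), (⟨i+1, by omega⟩ : Fin (k+1))} : Finset (Fin (k+1))).sum
          (fun b => Pt ⟨i, by omega⟩ b) = Pt ⟨i, by omega⟩ ⟨0, by omega⟩ + Pt ⟨i, by omega⟩ ⟨i+1, by omega⟩ := by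
        rw [Finset.sum_pair]
        intro h
        rw [Fin.mk.injEq] at h
        omega
      have hrest : ∑ b ∈ Finset.univ \ {(⟨0, by omega⟩ : Fin (k+1)), (⟨i+1, by omega⟩ : Fin (k+1))},
          Pt ⟨i, by omega⟩ b = 0 := by
        have hsplit := Finset.sum_sdiff (f := fun b => Pt ⟨i, by omega⟩ b)
          (Finset.subset_univ ({(⟨0, by omega⟩ : Fin (k+1)), (⟨i+1, by omega⟩ : Fin (k+1))} : Finset (Fin (k+1))))
        have h2 := hii'.2
        rw [hpair] at hsplit
        rw [hsum] at hsplit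
        linarith
      have hmem : Fin.castLE hsub b ∈ Finset.univ \
          {(⟨0, by omega⟩ : Fin (k+1)), (⟨i+1, by omega⟩ : Fin (k+1))} := by
        simp only [Finset.mem_sdiff, Finset.mem_univ, true_and, Finset.mem_insert,
          Finset.mem_singleton]
        push_neg
        constructor
        · intro h; exact hb (by simpa using congrArg Fin.val h)
        · intro h
          have := congrArg Fin.val h
          simp only [Fin.coe_castLE] at this
          have := b.isLt
          omega
      have := (Finset.sum_eq_zero_iff_of_nonneg (fun b _ => hPt.1 _ b)).mp hrest
        (Fin.castLE hsub b) hmem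
      exact this
    case hw =>
      intro n'
      have hcompP : (P.submatrix (Fin.castLE hsub) (Fin.castLE hsub)).submatrix
          (Fin.castLE (Nat.le_succ i)) (Fin.castLE (Nat.le_succ i))
          = P.submatrix (Fin.castLE hi) (Fin.castLE hi) := by
        ext a b; rfl
      have hcompPt : (Pt.submatrix (Fin.castLE hsub) (Fin.castLE hsub)).submatrix
          (Fin.castLE (Nat.le_succ i)) (Fin.castLE (Nat.le_succ i))
          = Pt.submatrix (Fin.castLE hi) (Fin.castLE hi) := by
        ext a b; rfl
      rw [hcompP, hcompPt]
      exact IH hik' n'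
end

section
/- Let P and P̃ be stochastic matrices on E_k = {0,...,k} with p_{k,k} = p̃_{k,k} = 1, both chains started at state 0. Assume there exist two coprime positive integers n_1 and n_2 such that P̃^{n_1} ⊴ P^{n_1} and P̃^{n_2} ⊴ P^{n_2}. Then T_k ⪯_{a.st} T̃_k: there exists n_0 ∈ ℕ such that (P̃^n)_{0,k} ≤ (P^n)_{0,k} for all n ≥ n_0. -/
open Finset Matrix

/-- Usual stochastic order between two vectors on `Fin m`. -/
def stDom {m : ℕ} (μ ν : Fin m → ℝ) : Prop :=
  ∀ j : Fin m, ∑ l ∈ Finset.univ.filter (fun l => j ≤ l), μ l ≤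
    ∑ l ∈ Finset.univ.filter (fun l => j ≤ l), ν l

/-- The relation `A' ⊴ A`. -/
def tri {m : ℕ} (A' A : Matrix (Fin m) (Fin m) ℝ) : Prop :=
  ∀ i j : Fin m, i ≤ j → stDom (A' i) (A j)

/-! ### Auxiliary lemmas -/

/-- Tail sum at a natural index. -/
noncomputable def tailN {k : ℕ} (x : Fin (k + 1) → ℝ) (t : ℕ) : ℝ :=
  ∑ l ∈ Finset.univ.filter (fun l : Fin (k + 1) => t ≤ l.val), x l

lemma tailN_val {k : ℕ} (x : Fin (k + 1) → ℝ) (j : Fin (k + 1)) :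
    tailN x j.val = ∑ l ∈ Finset.univ.filter (fun l => j ≤ l), x l := by
  unfold tailN
  apply Finset.sum_congr _ (fun _ _ => rfl)
  ext l
  simp only [Finset.mem_filter, Finset.mem_univ, true_and, Fin.le_def]

lemma stDom_tailN {k : ℕ} {μ ν : Fin (k + 1) → ℝ} (h : stDom μ ν) (t : ℕ) :
    tailN μ t ≤ tailN ν t := by
  by_cases ht : t ≤ k
  · have := h ⟨t, by omega⟩
    rw [← tailN_val, ← tailN_val] at this
    exact this
  · have he : (Finset.univ.filter (fun l : Fin (k + 1) => t ≤ l.val)) = ∅ := by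
      ext l
      simp only [Finset.mem_filter, Finset.mem_univ, true_and, Finset.notMem_empty, iff_false]
      have := l.isLt
      omega
    unfold tailN
    rw [he]
    simp

/-- Abel summation identity for tail sums. -/
lemma abel_identity {k : ℕ} (x g : Fin (k + 1) → ℝ) (G : ℕ → ℝ)
    (hG : ∀ l : Fin (k + 1), G l.val = g l) :
    ∑ l, x l * g l =
      G 0 * (∑ l, x l) +
        ∑ i ∈ Finset.range (k + 1), (G (i + 1) - G i) * tailN x (i + 1) := by
  have key : ∀ l : Fin (k + 1), g l = G 0 + ∑ i ∈ Finset.range l.val, (G (i + 1) - G i) := by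
    intro l
    rw [Finset.sum_range_sub G, hG]
    ring
  have h2 : ∑ i ∈ Finset.range (k + 1), (G (i + 1) - G i) * tailN x (i + 1)
      = ∑ l : Fin (k + 1), x l * ∑ i ∈ Finset.range l.val, (G (i + 1) - G i) := by
    have ht : ∀ i : ℕ, tailN x (i + 1)
        = ∑ l : Fin (k + 1), if i + 1 ≤ l.val then x l else 0 := by
      intro i
      unfold tailN
      rw [Finset.sum_filter]
    simp_rw [ht, Finset.mul_sum]
    rw [Finset.sum_comm]
    refine Finset.sum_congr rfl fun l _ => ?_
    have hfil : (Finset.range (k + 1)).filter (fun i => i + 1 ≤ l.val)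
        = Finset.range l.val := by
      ext i
      simp only [Finset.mem_filter, Finset.mem_range]
      have := l.isLt
      omega
    calc ∑ i ∈ Finset.range (k + 1), (G (i + 1) - G i) * (if i + 1 ≤ l.val then x l else 0)
        = ∑ i ∈ Finset.range (k + 1),
            (if i + 1 ≤ l.val then (G (i + 1) - G i) * x l else 0) := by
          refine Finset.sum_congr rfl fun i _ => ?_
          split <;> simp
      _ = ∑ i ∈ (Finset.range (k + 1)).filter (fun i => i + 1 ≤ l.val),
            (G (i + 1) - G i) * x l := by rw [Finset.sum_filter]
      _ = ∑ i ∈ Finset.range l.val, (G (i + 1) - G i) * x l := by rw [hfil]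
      _ = ∑ i ∈ Finset.range l.val, x l * (G (i + 1) - G i) :=
          Finset.sum_congr rfl fun i _ => mul_comm _ _

  rw [h2, Finset.mul_sum, ← Finset.sum_add_distrib]
  refine Finset.sum_congr rfl fun l _ => ?_
  rw [key l]
  ring

/-- Monotone expectation under stochastic domination. -/
lemma exp_mono {k : ℕ} (μ ν g : Fin (k + 1) → ℝ) (hdom : stDom μ ν)
    (hsum : ∑ l, μ l = ∑ l, ν l) (hg : Monotone g) :
    ∑ l, μ l * g l ≤ ∑ l, ν l * g l := by
  set G : ℕ → ℝ := fun i => g ⟨min i k, by omega⟩ with hGdef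
  have hGval : ∀ l : Fin (k + 1), G l.val = g l := by
    intro l
    have : (⟨min l.val k, by omega⟩ : Fin (k + 1)) = l := by
      apply Fin.ext
      simp only
      have := l.isLt
      omega
    simp [hGdef, this]
  have hGmono : Monotone G := by
    intro a b hab
    exact hg (by simp [Fin.le_def]; omega)
  rw [abel_identity μ g G hGval, abel_identity ν g G hGval, hsum]
  refine add_le_add le_rfl (Finset.sum_le_sum fun i _ => ?_)
  exact mul_le_mul_of_nonneg_left (stDom_tailN hdom (i + 1))
    (sub_nonneg.mpr (hGmono (Nat.le_succ i)))

lemma isStochastic_one {k : ℕ} : IsStochastic (1 : Matrix (Fin (k + 1)) (Fin (k + 1)) ℝ) := by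
  constructor
  · intro i j
    rw [Matrix.one_apply]
    split <;> norm_num
  · intro i
    simp [Matrix.one_apply]

lemma IsStochastic.mul {k : ℕ} {A B : Matrix (Fin (k + 1)) (Fin (k + 1)) ℝ}
    (hA : IsStochastic A) (hB : IsStochastic B) : IsStochastic (A * B) := by
  constructor
  · intro i j
    rw [Matrix.mul_apply]
    exact Finset.sum_nonneg fun m _ => mul_nonneg (hA.1 _ _) (hB.1 _ _)
  · intro i
    simp_rw [Matrix.mul_apply]
    rw [Finset.sum_comm]
    have : ∀ m : Fin (k + 1), ∑ j, A i m * B m j = A i m := by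
      intro m
      rw [← Finset.mul_sum, hB.2, mul_one]
    simp_rw [this]
    exact hA.2 i

lemma IsStochastic.pow {k : ℕ} {A : Matrix (Fin (k + 1)) (Fin (k + 1)) ℝ}
    (hA : IsStochastic A) (n : ℕ) : IsStochastic (A ^ n) := by
  induction n with
  | zero => simpa using isStochastic_one
  | succ n ih => rw [pow_succ]; exact ih.mul hA

/-- The key composition lemma: `⊴` is preserved under matrix products. -/
lemma tri_mul {k : ℕ} {A' A B' B : Matrix (Fin (k + 1)) (Fin (k + 1)) ℝ}
    (hA' : IsStochastic A') (hA : IsStochastic A)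
    (hAB : tri A' A) (hBB : tri B' B) : tri (A' * B') (A * B) := by
  intro i j hij t
  have hl : ∀ (C : Matrix (Fin (k + 1)) (Fin (k + 1)) ℝ)
      (D : Matrix (Fin (k + 1)) (Fin (k + 1)) ℝ) (r : Fin (k + 1)),
      ∑ l ∈ Finset.univ.filter (fun l => t ≤ l), (C * D) r l
        = ∑ m : Fin (k + 1), C r m * (∑ l ∈ Finset.univ.filter (fun l => t ≤ l), D m l) := by
    intro C D r
    simp_rw [Matrix.mul_apply]
    rw [Finset.sum_comm]
    refine Finset.sum_congr rfl fun m _ => ?_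
    rw [Finset.mul_sum]
  rw [hl A' B' i, hl A B j]
  set F' : Fin (k + 1) → ℝ := fun m => ∑ l ∈ Finset.univ.filter (fun l => t ≤ l), B' m l
  set F : Fin (k + 1) → ℝ := fun m => ∑ l ∈ Finset.univ.filter (fun l => t ≤ l), B m l
  have hne : ∀ m : Fin (k + 1), (Finset.univ.filter (fun m' => m ≤ m')).Nonempty :=
    fun m => ⟨m, by simp⟩
  set g : Fin (k + 1) → ℝ := fun m => (Finset.univ.filter (fun m' => m ≤ m')).inf' (hne m) F
    with hgdef
  have hF'g : ∀ m, F' m ≤ g m := by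
    intro m
    refine Finset.le_inf' _ _ fun m'' hm'' => ?_
    have hm : m ≤ m'' := by simpa using hm''
    exact hBB m m'' hm t
  have hgF : ∀ m, g m ≤ F m := fun m => Finset.inf'_le _ (by simp)
  have hgmono : Monotone g := by
    intro m m' hmm'
    obtain ⟨m₀, hm₀mem, hm₀⟩ := Finset.exists_mem_eq_inf' (hne m') F
    rw [hgdef]
    simp only
    rw [hm₀]
    refine Finset.inf'_le _ ?_
    simp only [Finset.mem_filter, Finset.mem_univ, true_and] at hm₀mem ⊢
    exact le_trans hmm' hm₀mem
  calc ∑ m, A' i m * F' m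
      ≤ ∑ m, A' i m * g m :=
        Finset.sum_le_sum fun m _ =>
          mul_le_mul_of_nonneg_left (hF'g m) (hA'.1 i m)
    _ ≤ ∑ m, A j m * g m :=
        exp_mono (A' i) (A j) g (hAB i j hij) (by rw [hA'.2 i, hA.2 j]) hgmono
    _ ≤ ∑ m, A j m * F m :=
        Finset.sum_le_sum fun m _ =>
          mul_le_mul_of_nonneg_left (hgF m) (hA.1 j m)

/-- Proposition 1.a (De Santis–Spizzichino): if `k` is absorbing for both
chains (started at `0`) and `P̃^{n₁} ⊴ P^{n₁}`, `P̃^{n₂} ⊴ P^{n₂}` for two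
coprime positive integers, then `T_k ⪯_{a.st} T̃_k`. -/
theorem tail_order_of_coprime_tri
    (k : ℕ) (P Pt : Matrix (Fin (k + 1)) (Fin (k + 1)) ℝ)
    (hP : IsStochastic P) (hPt : IsStochastic Pt)
    (habs : P (Fin.last k) (Fin.last k) = 1) (habst : Pt (Fin.last k) (Fin.last k) = 1)
    (n1 n2 : ℕ) (hn1 : 0 < n1) (hn2 : 0 < n2) (hcop : Nat.Coprime n1 n2)
    (h1 : tri (Pt ^ n1) (P ^ n1)) (h2 : tri (Pt ^ n2) (P ^ n2)) :
    ∃ n0 : ℕ, ∀ n : ℕ, n0 ≤ n →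
      (Pt ^ n) 0 (Fin.last k) ≤ (P ^ n) 0 (Fin.last k) := by
  -- `tri` is closed under adding exponents
  have tri_add : ∀ s t : ℕ, tri (Pt ^ s) (P ^ s) → tri (Pt ^ t) (P ^ t) →
      tri (Pt ^ (s + t)) (P ^ (s + t)) := by
    intro s t hs ht
    rw [pow_add, pow_add]
    exact tri_mul (hPt.pow s) (hP.pow s) hs ht
  -- positive multiples of n1 (resp. n2)
  have Hmul1 : ∀ a : ℕ, tri (Pt ^ ((a + 1) * n1)) (P ^ ((a + 1) * n1)) := by
    intro a
    induction a with
    | zero => simpa using h1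
    | succ a ih =>
      have : (a + 1 + 1) * n1 = (a + 1) * n1 + n1 := by ring
      rw [this]
      exact tri_add _ _ ih h1
  have Hmul2 : ∀ b : ℕ, tri (Pt ^ ((b + 1) * n2)) (P ^ ((b + 1) * n2)) := by
    intro b
    induction b with
    | zero => simpa using h2
    | succ b ih =>
      have : (b + 1 + 1) * n2 = (b + 1) * n2 + n2 := by ring
      rw [this]
      exact tri_add _ _ ih h2
  have Hcombo : ∀ a b : ℕ, 0 < a + b → tri (Pt ^ (a * n1 + b * n2)) (P ^ (a * n1 + b * n2)) := by
    intro a b hab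
    match a, b with
    | 0, 0 => omega
    | a + 1, 0 => simpa using Hmul1 a
    | 0, b + 1 => simpa using Hmul2 b
    | a + 1, b + 1 => exact tri_add _ _ (Hmul1 a) (Hmul2 b)
  -- representation of all large n
  have hrep : ∀ n : ℕ, n1 * n2 ≤ n → ∃ a b : ℕ, a * n1 + b * n2 = n := by
    intro n hn
    by_cases h1e : n1 = 1
    · subst h1e
      exact ⟨n, 0, by omega⟩
    by_cases h2e : n2 = 1
    · subst h2e
      exact ⟨0, n, by omega⟩
    have h1' : 1 < n1 := by omega
    have h2' : 1 < n2 := by omega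
    have hfrob := frobeniusNumber_pair hcop h1' h2'
    have hgt : n1 * n2 - n1 - n2 < n := by
      have h0 : 0 < n1 * n2 := Nat.mul_pos hn1 hn2
      calc n1 * n2 - n1 - n2 = n1 * n2 - (n1 + n2) := by rw [Nat.sub_sub]
        _ < n1 * n2 := Nat.sub_lt h0 (by omega)
        _ ≤ n := hn
    have hmem : n ∈ AddSubmonoid.closure ({n1, n2} : Set ℕ) := by
      by_contra hnot
      exact absurd (hfrob.2 hnot) (by omega)
    obtain ⟨a, b, hab⟩ := (AddSubmonoid.mem_closure_pair n1 n2 n).mp hmem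
    exact ⟨a, b, by simpa [smul_eq_mul] using hab⟩
  refine ⟨n1 * n2, fun n hn => ?_⟩
  obtain ⟨a, b, hab⟩ := hrep n hn
  have hposab : 0 < a + b := by
    rcases Nat.eq_zero_or_pos (a + b) with h | h
    · have ha : a = 0 := by omega
      have hb : b = 0 := by omega
      rw [ha, hb] at hab
      simp at hab
      have : 0 < n1 * n2 := Nat.mul_pos hn1 hn2
      omega
    · exact h
  have htri : tri (Pt ^ n) (P ^ n) := hab ▸ Hcombo a b hposab
  have hst := htri 0 0 le_rfl (Fin.last k)
  have hset : (Finset.univ.filter (fun l : Fin (k + 1) => Fin.last k ≤ l))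
      = {Fin.last k} := by
    ext l
    simp only [Finset.mem_filter, Finset.mem_univ, true_and, Finset.mem_singleton]
    constructor
    · intro hle
      exact le_antisymm (Fin.le_last l) hle
    · intro h
      rw [h]
  rw [hset] at hst
  simpa using hst
end

section
/- Let P̃ and P be stochastic matrices on E_k = {0,...,k} with p̃_{k,k} = p_{k,k} = 1, and let Q̃ and Q be their leading k×k submatrices. Assume that Q̃ is primitive and that μ(P̃) > μ(P), i.e. the spectral radius of Q̃ is strictly larger than the spectral radius of Q (equivalently λ(P̃) < λ(P)). Then there exists n_0 ∈ ℕ such that P̃^n ⊴ P^n for all n ≥ n_0. -/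
open Finset Matrix Filter
open scoped NNReal ENNReal

/-- The leading `k × k` submatrix of a matrix on `{0, …, k}`. -/
def lead {k : ℕ} (P : Matrix (Fin (k + 1)) (Fin (k + 1)) ℝ) :
    Matrix (Fin k) (Fin k) ℝ :=
  P.submatrix Fin.castSucc Fin.castSucc

/-- The spectral radius of a real matrix: the supremum of the moduli of its
complex eigenvalues. -/
noncomputable def specRad {m : ℕ} (Q : Matrix (Fin m) (Fin m) ℝ) : ℝ :=
  sSup { r : ℝ | ∃ z ∈ spectrum ℂ (Q.map Complex.ofReal), r = ‖z‖ }

/-- `Q` is primitive: some power of `Q` has all entries strictly positive. -/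
def IsPrimitive {m : ℕ} (Q : Matrix (Fin m) (Fin m) ℝ) : Prop :=
  ∃ n : ℕ, 0 < n ∧ ∀ i j, 0 < (Q ^ n) i j


/- ### Auxiliary lemmas -/

lemma pow_entry_nonneg_s10 {m : ℕ} {A : Matrix (Fin m) (Fin m) ℝ} (h : ∀ i j, 0 ≤ A i j) :
    ∀ n i j, 0 ≤ (A ^ n) i j := by
  intro n
  induction n with
  | zero =>
    intro i j; rw [pow_zero, Matrix.one_apply]; split <;> norm_num
  | succ n ih =>
    intro i j
    rw [pow_succ, Matrix.mul_apply]
    exact Finset.sum_nonneg fun a _ => mul_nonneg (ih i a) (h a j)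

lemma triple_ge {m : ℕ} {A B C : Matrix (Fin m) (Fin m) ℝ}
    (hA : ∀ i j, 0 ≤ A i j) (hB : ∀ i j, 0 ≤ B i j) (hC : ∀ i j, 0 ≤ C i j)
    (i j a b : Fin m) : A i a * B a b * C b j ≤ (A * B * C) i j := by
  calc A i a * B a b * C b j ≤ (A * B) i b * C b j := by
        apply mul_le_mul_of_nonneg_right _ (hC b j)
        rw [Matrix.mul_apply]
        exact Finset.single_le_sum (f := fun y => A i y * B y b)
          (fun y _ => mul_nonneg (hA i y) (hB y b)) (mem_univ a)
  _ ≤ (A * B * C) i j := by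
        rw [Matrix.mul_apply (M := A * B)]
        refine Finset.single_le_sum (f := fun y => (A * B) i y * C y j)
          (fun y _ => mul_nonneg ?_ (hC y j)) (mem_univ b)
        rw [Matrix.mul_apply]
        exact Finset.sum_nonneg fun z _ => mul_nonneg (hA i z) (hB z y)

section normlemmas

attribute [local instance] Matrix.linftyOpNormedRing Matrix.linftyOpNormedAlgebra
  Matrix.linftyOpNormedAddCommGroup

variable {m : ℕ}

noncomputable instance : CompleteSpace (Matrix (Fin m) (Fin m) ℂ) :=
  inferInstance

lemma norm_map_ofReal (A : Matrix (Fin m) (Fin m) ℝ) : ‖A.map Complex.ofReal‖ = ‖A‖ := by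
  rw [Matrix.linfty_opNorm_def, Matrix.linfty_opNorm_def]
  simp [Matrix.map_apply]

lemma mapR_pow (A : Matrix (Fin m) (Fin m) ℝ) (n : ℕ) :
    (A.map Complex.ofReal) ^ n = (A ^ n).map Complex.ofReal := by
  have : A.map Complex.ofReal = Complex.ofRealHom.mapMatrix A := rfl
  rw [this, ← map_pow]; rfl

lemma abs_entry_le_norm (A : Matrix (Fin m) (Fin m) ℝ) (i j : Fin m) : |A i j| ≤ ‖A‖ := by
  rw [Matrix.linfty_opNorm_def]
  calc |A i j| = ((‖A i j‖₊ : ℝ≥0) : ℝ) := rfl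
  _ ≤ ((∑ j', ‖A i j'‖₊ : ℝ≥0) : ℝ) := by
      exact_mod_cast NNReal.coe_le_coe.mpr (Finset.single_le_sum (f := fun j' => ‖A i j'‖₊)
        (fun _ _ => zero_le) (mem_univ j))
  _ ≤ _ := by
      exact_mod_cast NNReal.coe_le_coe.mpr (Finset.le_sup (f := fun i => ∑ j', ‖A i j'‖₊)
        (mem_univ i))

lemma norm_le_card_mul_entry [NeZero m] (A : Matrix (Fin m) (Fin m) ℝ)
    (h : ∀ i j, 0 ≤ A i j) : ∃ a b, ‖A‖ ≤ m * A a b := by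
  obtain ⟨a, -, ha⟩ := Finset.exists_mem_eq_sup (univ : Finset (Fin m)) univ_nonempty
    (fun i => ∑ j', ‖A i j'‖₊)
  obtain ⟨b, -, hb⟩ := Finset.exists_max_image (univ : Finset (Fin m)) (fun j => A a j)
    univ_nonempty
  refine ⟨a, b, ?_⟩
  rw [Matrix.linfty_opNorm_def, ha]
  push_cast
  calc (∑ j', ‖A a j'‖) ≤ ∑ _j' : Fin m, A a b := by
        refine Finset.sum_le_sum fun j' _ => ?_
        rw [Real.norm_eq_abs, abs_of_nonneg (h a j')]
        exact hb j' (mem_univ _)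
  _ = m * A a b := by simp [mul_comm]

lemma specRad_nonneg (Q : Matrix (Fin m) (Fin m) ℝ) : 0 ≤ specRad Q := by
  apply Real.sSup_nonneg
  rintro r ⟨z, -, rfl⟩
  exact norm_nonneg z

lemma specRad_pow_le_norm [NeZero m] (Q : Matrix (Fin m) (Fin m) ℝ) (n : ℕ) :
    specRad Q ^ (n + 1) ≤ ‖Q ^ (n + 1)‖ := by
  set a := Q.map Complex.ofReal with ha
  have h1 : spectralRadius ℂ a ≤ (‖a ^ (n + 1)‖₊ : ℝ≥0∞) ^ (1 / (n + 1) : ℝ) := by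
    simpa using spectrum.spectralRadius_le_pow_nnnorm_pow_one_div ℂ a n
  have hfin : (‖a ^ (n + 1)‖₊ : ℝ≥0∞) ^ (1 / (n + 1) : ℝ) ≠ ⊤ :=
    ENNReal.rpow_ne_top_of_nonneg (by positivity) ENNReal.coe_ne_top
  have key : specRad Q ≤ ((‖a ^ (n + 1)‖₊ : ℝ≥0∞) ^ (1 / (n + 1) : ℝ)).toReal := by
    apply Real.sSup_le
    · rintro r ⟨z, hz, rfl⟩
      have h2 : (‖z‖₊ : ℝ≥0∞) ≤ (‖a ^ (n + 1)‖₊ : ℝ≥0∞) ^ (1 / (n + 1) : ℝ) :=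
        le_trans (le_iSup₂ (f := fun k (_ : k ∈ spectrum ℂ a) => (‖k‖₊ : ℝ≥0∞)) z hz) h1
      have := ENNReal.toReal_mono hfin h2
      simpa using this
    · exact ENNReal.toReal_nonneg
  have hb : ((‖a ^ (n + 1)‖₊ : ℝ≥0∞) ^ (1 / (n + 1) : ℝ)).toReal
      = ‖a ^ (n + 1)‖ ^ (1 / (n + 1) : ℝ) := by
    rw [← ENNReal.toReal_rpow]
    simp
  rw [hb] at key
  have h3 := pow_le_pow_left₀ (specRad_nonneg Q) key (n + 1)
  have h4 : (‖a ^ (n + 1)‖ ^ (1 / (n + 1) : ℝ)) ^ (n + 1) = ‖a ^ (n + 1)‖ := by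
    rw [← Real.rpow_natCast (‖a ^ (n + 1)‖ ^ (1 / (n + 1) : ℝ)) (n + 1),
      ← Real.rpow_mul (norm_nonneg _), one_div, Nat.cast_add, Nat.cast_one,
      inv_mul_cancel₀ (by positivity : ((n : ℝ) + 1) ≠ 0), Real.rpow_one]
  rw [h4] at h3
  rwa [ha, mapR_pow, norm_map_ofReal] at h3

lemma evNormPowLe [NeZero m] (Q : Matrix (Fin m) (Fin m) ℝ) {ρ : ℝ}
    (h : specRad Q < ρ) : ∀ᶠ n in atTop, ‖Q ^ n‖ ≤ ρ ^ n := by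
  set a := Q.map Complex.ofReal with ha
  have hρ0 : 0 < ρ := lt_of_le_of_lt (specRad_nonneg Q) h
  have hbdd : BddAbove {r : ℝ | ∃ z ∈ spectrum ℂ a, r = ‖z‖} := by
    refine ⟨‖a‖, ?_⟩
    rintro r ⟨z, hz, rfl⟩
    exact spectrum.norm_le_norm_of_mem hz
  have hsr : spectralRadius ℂ a ≤ ENNReal.ofReal (specRad Q) := by
    apply iSup₂_le
    intro z hz
    have h5 : ‖z‖ ≤ specRad Q := le_csSup hbdd ⟨z, hz, rfl⟩
    calc (‖z‖₊ : ℝ≥0∞) = ENNReal.ofReal ‖z‖ := by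
          exact (ofReal_norm z).symm
    _ ≤ _ := ENNReal.ofReal_le_ofReal h5
  have hlt : spectralRadius ℂ a < ENNReal.ofReal ρ :=
    lt_of_le_of_lt hsr ((ENNReal.ofReal_lt_ofReal_iff hρ0).mpr h)
  have hev := (spectrum.pow_nnnorm_pow_one_div_tendsto_nhds_spectralRadius a).eventually_lt_const hlt
  filter_upwards [hev, eventually_ge_atTop 1] with n hn hn1
  have hne : ((n : ℝ)) ≠ 0 := by positivity
  have hx : (‖a ^ n‖₊ : ℝ≥0∞) = ((‖a ^ n‖₊ : ℝ≥0∞) ^ (1 / n : ℝ)) ^ (n : ℝ) := by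
    rw [← ENNReal.rpow_mul, one_div, inv_mul_cancel₀ hne, ENNReal.rpow_one]
  have h6 : (‖a ^ n‖₊ : ℝ≥0∞) ≤ ENNReal.ofReal (ρ ^ n) := by
    rw [hx]
    calc ((‖a ^ n‖₊ : ℝ≥0∞) ^ (1 / n : ℝ)) ^ (n : ℝ)
        ≤ (ENNReal.ofReal ρ) ^ (n : ℝ) := ENNReal.rpow_le_rpow hn.le (by positivity)
    _ = (ENNReal.ofReal ρ) ^ (n : ℕ) := ENNReal.rpow_natCast _ n
    _ = ENNReal.ofReal (ρ ^ n) := (ENNReal.ofReal_pow hρ0.le n).symm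
  rw [← enorm_eq_nnnorm, ← ofReal_norm, ENNReal.ofReal_le_ofReal_iff (by positivity)] at h6
  rwa [ha, mapR_pow, norm_map_ofReal] at h6

/-- Key quantitative estimate: eventually every entry of `Qt ^ n`, scaled down by
`m + 1`, dominates every entry of `Q ^ n`. -/
lemma key_lemma [NeZero m] (Q Qt : Matrix (Fin m) (Fin m) ℝ)
    (hQ0 : ∀ i j, 0 ≤ Q i j) (hQt0 : ∀ i j, 0 ≤ Qt i j)
    (hprim : ∃ n : ℕ, 0 < n ∧ ∀ i j, 0 < (Qt ^ n) i j)
    (hspec : specRad Q < specRad Qt) :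
    ∀ᶠ n in atTop, ∀ i j a b : Fin m, ((m : ℝ) + 1) * (Q ^ n) i j ≤ (Qt ^ n) a b := by
  have hmpos : (0 : ℝ) < m := by
    exact_mod_cast Nat.pos_of_ne_zero (NeZero.ne m)
  set μ := specRad Q with hμdef
  set μt := specRad Qt with hμtdef
  have hμ0 : 0 ≤ μ := specRad_nonneg Q
  have hμt : 0 < μt := lt_of_le_of_lt hμ0 hspec
  set ρ := (μ + μt) / 2 with hρdef
  have hρμ : μ < ρ := by rw [hρdef]; linarith
  have hρμt : ρ < μt := by rw [hρdef]; linarith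
  have hρ0 : 0 ≤ ρ := by rw [hρdef]; linarith
  obtain ⟨m₀, hm₀pos, hm₀⟩ := hprim
  have : Nonempty (Fin m) := Fin.pos_iff_nonempty.mp (Nat.pos_of_ne_zero (NeZero.ne m))
  obtain ⟨p, -, hpmin⟩ := Finset.exists_min_image (univ : Finset (Fin m × Fin m))
    (fun p => (Qt ^ m₀) p.1 p.2) ⟨(Classical.arbitrary _, Classical.arbitrary _), mem_univ _⟩
  set δ := (Qt ^ m₀) p.1 p.2 with hδdef
  have hδ : 0 < δ := hm₀ _ _
  have hδle : ∀ a b, δ ≤ (Qt ^ m₀) a b := fun a b => hpmin (a, b) (mem_univ _)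
  set c := δ ^ 2 / (m * μt ^ (2 * m₀)) with hcdef
  have hcpos : 0 < c := by
    rw [hcdef]; positivity
  -- lower bound on entries of Qt ^ n
  have hlow : ∀ n, 2 * m₀ + 1 ≤ n → ∀ a b, c * μt ^ n ≤ (Qt ^ n) a b := by
    intro n hn a b
    set t := n - (2 * m₀ + 1) with htdef
    have hnt : n = m₀ + (t + 1) + m₀ := by omega
    obtain ⟨a₀, b₀, hab⟩ := norm_le_card_mul_entry (Qt ^ (t + 1)) (pow_entry_nonneg_s10 hQt0 _)
    have hnormlow : μt ^ (t + 1) ≤ (m : ℝ) * (Qt ^ (t + 1)) a₀ b₀ :=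
      le_trans (specRad_pow_le_norm Qt t) hab
    have hentry : μt ^ (t + 1) / m ≤ (Qt ^ (t + 1)) a₀ b₀ := by
      rw [div_le_iff₀ hmpos]; linarith [hnormlow]
    have htriple : δ * (Qt ^ (t + 1)) a₀ b₀ * δ ≤ (Qt ^ n) a b := by
      have heq : Qt ^ m₀ * Qt ^ (t + 1) * Qt ^ m₀ = Qt ^ n := by
        rw [← pow_add, ← pow_add]; congr 1; omega
      have h0 := triple_ge (pow_entry_nonneg_s10 hQt0 m₀) (pow_entry_nonneg_s10 hQt0 (t + 1))
        (pow_entry_nonneg_s10 hQt0 m₀) a b a₀ b₀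
      rw [heq] at h0
      have e1 : δ * (Qt ^ (t + 1)) a₀ b₀ ≤ (Qt ^ m₀) a a₀ * (Qt ^ (t + 1)) a₀ b₀ :=
        mul_le_mul_of_nonneg_right (hδle a a₀) (pow_entry_nonneg_s10 hQt0 _ _ _)
      have e2 : δ * (Qt ^ (t + 1)) a₀ b₀ * δ
          ≤ (Qt ^ m₀) a a₀ * (Qt ^ (t + 1)) a₀ b₀ * (Qt ^ m₀) b₀ b :=
        mul_le_mul e1 (hδle b₀ b) hδ.le
          (mul_nonneg (pow_entry_nonneg_s10 hQt0 _ _ _) (pow_entry_nonneg_s10 hQt0 _ _ _))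
      exact le_trans e2 h0
    have hcal : c * μt ^ n = δ ^ 2 * (μt ^ (t + 1) / m) := by
      rw [hcdef, hnt, show m₀ + (t + 1) + m₀ = 2 * m₀ + (t + 1) by omega, pow_add]
      field_simp
    rw [hcal]
    calc δ ^ 2 * (μt ^ (t + 1) / m) ≤ δ ^ 2 * (Qt ^ (t + 1)) a₀ b₀ := by
          exact mul_le_mul_of_nonneg_left hentry (by positivity)
    _ = δ * (Qt ^ (t + 1)) a₀ b₀ * δ := by ring
    _ ≤ _ := htriple
  -- upper bound on entries of Q ^ n
  have hup := evNormPowLe Q hρμ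
  -- eventual comparison of the geometric factors
  have hlim : Tendsto (fun n : ℕ => (ρ / μt) ^ n) atTop (nhds 0) :=
    tendsto_pow_atTop_nhds_zero_of_lt_one (by positivity) (by rwa [div_lt_one hμt])
  have hev2 : ∀ᶠ n in atTop, (ρ / μt) ^ n < c / ((m : ℝ) + 1) :=
    hlim.eventually_lt_const (by positivity)
  filter_upwards [hup, hev2, eventually_ge_atTop (2 * m₀ + 1)] with n h1 h2 h3
  intro i j a b
  have hQentry : (Q ^ n) i j ≤ ρ ^ n :=
    le_trans (le_abs_self _) (le_trans (abs_entry_le_norm _ i j) h1)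
  have hmid : ((m : ℝ) + 1) * ρ ^ n ≤ c * μt ^ n := by
    rw [div_pow, div_lt_div_iff₀ (by positivity) (by positivity)] at h2
    nlinarith [h2]
  calc ((m : ℝ) + 1) * (Q ^ n) i j ≤ ((m : ℝ) + 1) * ρ ^ n :=
        mul_le_mul_of_nonneg_left hQentry (by positivity)
  _ ≤ c * μt ^ n := hmid
  _ ≤ (Qt ^ n) a b := hlow n h3 a b

end normlemmas

lemma isStoch_pow {m : ℕ} {P : Matrix (Fin m) (Fin m) ℝ} (hP : IsStochastic P) (n : ℕ) :
    IsStochastic (P ^ n) := by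
  induction n with
  | zero =>
    constructor
    · intro i j; rw [pow_zero, Matrix.one_apply]; split <;> norm_num
    · intro i; rw [pow_zero]; simp [Matrix.one_apply]
  | succ n ih =>
    constructor
    · intro i j
      rw [pow_succ, Matrix.mul_apply]
      exact Finset.sum_nonneg fun a _ => mul_nonneg (ih.1 i a) (hP.1 a j)
    · intro i
      rw [pow_succ]
      calc ∑ j, (P ^ n * P) i j = ∑ j, ∑ a, (P ^ n) i a * P a j := by
            simp [Matrix.mul_apply]
      _ = ∑ a, ∑ j, (P ^ n) i a * P a j := Finset.sum_comm
      _ = ∑ a, (P ^ n) i a * ∑ j, P a j := by simp [Finset.mul_sum]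
      _ = 1 := by simp only [hP.2, mul_one]; exact ih.2 i

lemma last_row {k : ℕ} {P : Matrix (Fin (k + 1)) (Fin (k + 1)) ℝ} (hP : IsStochastic P)
    (habs : P (Fin.last k) (Fin.last k) = 1) :
    ∀ j, j ≠ Fin.last k → P (Fin.last k) j = 0 := by
  intro j hj
  have hsum := hP.2 (Fin.last k)
  rw [← Finset.add_sum_erase _ _ (mem_univ (Fin.last k)), habs] at hsum
  have hz : ∑ x ∈ univ.erase (Fin.last k), P (Fin.last k) x = 0 := by linarith
  have := (Finset.sum_eq_zero_iff_of_nonneg (fun x _ => hP.1 _ x)).mp hz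
  exact this j (Finset.mem_erase.mpr ⟨hj, mem_univ j⟩)

lemma pow_last_row {k : ℕ} {P : Matrix (Fin (k + 1)) (Fin (k + 1)) ℝ} (hP : IsStochastic P)
    (habs : P (Fin.last k) (Fin.last k) = 1) (n : ℕ) :
    ∀ j, j ≠ Fin.last k → (P ^ n) (Fin.last k) j = 0 := by
  induction n with
  | zero =>
    intro j hj; rw [pow_zero]; exact Matrix.one_apply_ne (Ne.symm hj)
  | succ n ih =>
    intro j hj
    rw [pow_succ, Matrix.mul_apply]
    apply Finset.sum_eq_zero
    intro a _
    by_cases ha : a = Fin.last k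
    · rw [ha, last_row hP habs j hj, mul_zero]
    · rw [ih a ha, zero_mul]

lemma lead_pow_apply {k : ℕ} {P : Matrix (Fin (k + 1)) (Fin (k + 1)) ℝ} (hP : IsStochastic P)
    (habs : P (Fin.last k) (Fin.last k) = 1) (n : ℕ) :
    ∀ i j : Fin k, (P ^ n) i.castSucc j.castSucc = ((lead P) ^ n) i j := by
  induction n with
  | zero =>
    intro i j
    rw [pow_zero, pow_zero]
    simp [Matrix.one_apply, Fin.castSucc_inj]
  | succ n ih =>
    intro i j
    rw [pow_succ, pow_succ, Matrix.mul_apply, Matrix.mul_apply, Fin.sum_univ_castSucc]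
    have hlast : P (Fin.last k) j.castSucc = 0 :=
      last_row hP habs _ (Fin.castSucc_lt_last j).ne
    rw [hlast, mul_zero, add_zero]
    refine Finset.sum_congr rfl fun a _ => ?_
    rw [ih i a]
    rfl

/-- Theorem 7 (De Santis–Spizzichino): if `k` is absorbing for both chains,
the taboo matrix `Q̃` of `P̃` is primitive, and the second eigenvalue moduli
satisfy `μ(P) < μ(P̃)` (i.e. `λ(P̃) < λ(P)`), then `P̃^n ⊴ P^n` for all `n`
large enough. -/
theorem eventual_tri_of_spectral_gap
    (k : ℕ) (P Pt : Matrix (Fin (k + 1)) (Fin (k + 1)) ℝ)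
    (hP : IsStochastic P) (hPt : IsStochastic Pt)
    (habs : P (Fin.last k) (Fin.last k) = 1) (habst : Pt (Fin.last k) (Fin.last k) = 1)
    (hprim : _root_.IsPrimitive (lead Pt))
    (hspec : specRad (lead P) < specRad (lead Pt)) :
    ∃ n0 : ℕ, ∀ n : ℕ, n0 ≤ n → tri (Pt ^ n) (P ^ n) := by
  cases k with
  | zero =>
    exfalso
    have : lead P = lead Pt := by funext i; exact i.elim0
    rw [this] at hspec
    exact lt_irrefl _ hspec
  | succ k' =>
    haveI : NeZero (k' + 1) := ⟨Nat.succ_ne_zero k'⟩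
    obtain ⟨N, hN⟩ := Filter.eventually_atTop.mp
      (key_lemma (lead P) (lead Pt) (fun i j => hP.1 _ _) (fun i j => hPt.1 _ _) hprim hspec)
    refine ⟨N, fun n hn => ?_⟩
    intro i j hij j'
    have hPn := isStoch_pow hP n
    have hPtn := isStoch_pow hPt n
    -- rewrite the upper-tail sums as 1 minus lower sums
    have hcompl : ∀ (A : Matrix (Fin (k' + 1 + 1)) (Fin (k' + 1 + 1)) ℝ) (r : Fin (k' + 1 + 1)),
        IsStochastic A →
        ∑ l ∈ univ.filter (fun l => j' ≤ l), A r l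
          = 1 - ∑ l ∈ univ.filter (fun l => ¬ (j' ≤ l)), A r l := by
      intro A r hA
      have h := Finset.sum_filter_add_sum_filter_not univ (fun l => j' ≤ l) (A r)
      rw [hA.2 r] at h
      linarith
    rw [hcompl _ _ hPtn, hcompl _ _ hPn]
    have hmain : ∑ l ∈ univ.filter (fun l => ¬ (j' ≤ l)), (P ^ n) j l
        ≤ ∑ l ∈ univ.filter (fun l => ¬ (j' ≤ l)), (Pt ^ n) i l := by
      by_cases hjlast : j = Fin.last (k' + 1)
      · -- the row of P ^ n is concentrated at the last state
        have hzero : ∑ l ∈ univ.filter (fun l => ¬ (j' ≤ l)), (P ^ n) j l = 0 := by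
          apply Finset.sum_eq_zero
          intro l hl
          rw [Finset.mem_filter, not_le] at hl
          have hllast : l ≠ Fin.last (k' + 1) := by
            intro h
            exact absurd (h ▸ hl.2) (not_lt.mpr (Fin.le_last j'))
          rw [hjlast]
          exact pow_last_row hP habs n l hllast
        rw [hzero]
        exact Finset.sum_nonneg fun l _ => hPtn.1 i l
      · -- both i and j avoid the last state
        have hilast : i ≠ Fin.last (k' + 1) := by
          intro h
          exact hjlast (le_antisymm (Fin.le_last j) (h ▸ hij))
        by_cases hj'0 : j' = 0
        · subst hj'0
          have : univ.filter (fun l : Fin (k' + 1 + 1) => ¬ ((0 : Fin (k' + 1 + 1)) ≤ l)) = ∅ := by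
            apply Finset.filter_false_of_mem
            intro l _
            simp [Fin.zero_le]
          rw [this]
          simp
        · -- nonempty prefix: compare through the key estimate
          set i₀ := i.castPred hilast with hi₀
          set j₀ := j.castPred hjlast with hj₀
          have hkey := hN n hn
          have h0mem : (0 : Fin (k' + 1 + 1)) ∈ univ.filter (fun l => ¬ (j' ≤ l)) := by
            rw [Finset.mem_filter]
            refine ⟨mem_univ _, ?_⟩
            rw [not_le]
            exact Fin.pos_iff_ne_zero.mpr hj'0
          set M : ℝ := (lead Pt ^ n) i₀ 0 / ((k' + 1 : ℝ) + 1) with hM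
          have hMnn : 0 ≤ (lead Pt ^ n) i₀ 0 :=
            pow_entry_nonneg_s10 (fun a b => hPt.1 _ _) n i₀ 0
          have hden : (0 : ℝ) < (k' + 1 : ℝ) + 1 := by positivity
          have hstepA : ∀ l ∈ univ.filter (fun l => ¬ (j' ≤ l)), (P ^ n) j l ≤ M := by
            intro l hl
            rw [Finset.mem_filter, not_le] at hl
            have hllast : l ≠ Fin.last (k' + 1) := by
              intro h
              exact absurd (h ▸ hl.2) (not_lt.mpr (Fin.le_last j'))
            set l₀ := l.castPred hllast with hl₀
            have he : (P ^ n) j l = ((lead P) ^ n) j₀ l₀ := by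
              rw [← lead_pow_apply hP habs n j₀ l₀, hj₀, hl₀,
                Fin.castSucc_castPred, Fin.castSucc_castPred]
            rw [he, hM, le_div_iff₀ hden]
            have hk := hkey j₀ l₀ i₀ 0
            push_cast at hk ⊢
            linarith
          have hstepB : ∑ l ∈ univ.filter (fun l => ¬ (j' ≤ l)), (P ^ n) j l
              ≤ (lead Pt ^ n) i₀ 0 := by
            calc ∑ l ∈ univ.filter (fun l => ¬ (j' ≤ l)), (P ^ n) j l
                ≤ (univ.filter (fun l => ¬ (j' ≤ l))).card • M :=
                  Finset.sum_le_card_nsmul _ _ M hstepA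
            _ = ((univ.filter (fun l => ¬ (j' ≤ l))).card : ℝ) * M := nsmul_eq_mul _ _
            _ ≤ ((k' + 1 : ℝ) + 1) * M := by
                  apply mul_le_mul_of_nonneg_right _ (by positivity)
                  have hcard : (univ.filter (fun l => ¬ (j' ≤ l))).card ≤ k' + 1 + 1 := by
                    calc (univ.filter (fun l => ¬ (j' ≤ l))).card
                        ≤ (univ : Finset (Fin (k' + 1 + 1))).card := Finset.card_filter_le _ _
                    _ = k' + 1 + 1 := by simp
                  exact_mod_cast hcard
            _ = (lead Pt ^ n) i₀ 0 := mul_div_cancel₀ _ (ne_of_gt hden)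
          have hstepC : (lead Pt ^ n) i₀ 0 ≤ ∑ l ∈ univ.filter (fun l => ¬ (j' ≤ l)), (Pt ^ n) i l := by
            have he : (Pt ^ n) i 0 = (lead Pt ^ n) i₀ 0 := by
              rw [← lead_pow_apply hPt habst n i₀ 0, hi₀, Fin.castSucc_castPred, Fin.castSucc_zero]
            rw [← he]
            exact Finset.single_le_sum (fun l _ => hPtn.1 i l) h0mem
          linarith
    linarith [hmain]
end
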